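/- Let A be a graded-commutative superalgebra over a field of characteristic not 2, and let J be a homogeneous ideal of A. Then √J := { x ∈ A : x^n ∈ J for some n ∈ N } is a homogeneous ideal of A, and √J = √(J ∩ R) ⊕ A_0^odd ⊕ A_1^ev, where R = A_0^ev ⊕ A_1^odd and √(J ∩ R) is the radical of the ideal J ∩ R in the commutative ring R. Moreover, A/√J is a reduced commutative ring. -/

import Mathlib

/-- A graded-commutative graded superalgebra over `k`: a `ℤ × ZMod 2`-graded
`k`-algebra satisfying the sign rule `ab = (-1)^(|a|·|b| + deg a · deg b) ba`
for homogeneous elements. -/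
structure GradedSuperalgebra (k A : Type) [Field k] [Ring A] [Algebra k A] where
  grading : ℤ × ZMod 2 → Submodule k A
  one_mem : (1 : A) ∈ grading (0, 0)
  mul_mem : ∀ {i j : ℤ × ZMod 2} {a b : A},
    a ∈ grading i → b ∈ grading j → a * b ∈ grading (i + j)
  internal : DirectSum.IsInternal grading
  comm : ∀ {m n : ℤ} {s t : ZMod 2} {a b : A}, a ∈ grading (m, s) → b ∈ grading (n, t) →
    a * b = ((-1 : k) ^ ((s * t).val + (m * n).natAbs)) • (b * a)

namespace GradedSuperalgebra

variable {k A : Type} [Field k] [Ring A] [Algebra k A] (GS : GradedSuperalgebra k A)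

/-- The sum of the graded pieces whose index satisfies a predicate. -/
def piece (P : ℤ × ZMod 2 → Prop) : Submodule k A :=
  ⨆ p : {p : ℤ × ZMod 2 // P p}, GS.grading p

/-- `R = A₀ᵉᵛ ⊕ A₁ᵒᵈᵈ`: even ℤ-degree with parity `0` together with odd ℤ-degree
with parity `1`; an ordinary-commutative subalgebra of `A`. -/
def Rsub : Submodule k A :=
  GS.piece fun p => (Even p.1 ∧ p.2 = 0) ∨ (Odd p.1 ∧ p.2 = 1)

/-- `A₀ᵉᵛ`: even ℤ-degree, parity `0`. -/
def A0ev : Submodule k A := GS.piece fun p => Even p.1 ∧ p.2 = 0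

/-- `A₁ᵒᵈᵈ`: odd ℤ-degree, parity `1`. -/
def A1odd : Submodule k A := GS.piece fun p => Odd p.1 ∧ p.2 = 1

/-- `A₀ᵒᵈᵈ`: odd ℤ-degree, parity `0`. -/
def A0odd : Submodule k A := GS.piece fun p => Odd p.1 ∧ p.2 = 0

/-- `A₁ᵉᵛ`: even ℤ-degree, parity `1`. -/
def A1ev : Submodule k A := GS.piece fun p => Even p.1 ∧ p.2 = 1

/-- A submodule of `A` is homogeneous if it is spanned by its homogeneous elements. -/
def IsHomogeneous (I : Submodule k A) : Prop :=
  I = Submodule.span k {x : A | x ∈ I ∧ ∃ p, x ∈ GS.grading p}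

end GradedSuperalgebra

namespace GradedSuperalgebra

variable {k A : Type} [Field k] [Ring A] [Algebra k A] (GS : GradedSuperalgebra k A)

open DirectSum

lemma filter_irrel {P : ℤ × ZMod 2 → Prop} (i1 i2 : DecidablePred P)
    (f : ⨁ p, GS.grading p) :
    @DFinsupp.filter _ _ _ P i1 f = @DFinsupp.filter _ _ _ P i2 f := by
  cases Subsingleton.elim i1 i2; rfl

noncomputable def decL : A ≃ₗ[k] ⨁ p, GS.grading p :=
  (LinearEquiv.ofBijective (coeLinearMap GS.grading) GS.internal).symm

lemma coe_decL (x : A) : coeLinearMap GS.grading (GS.decL x) = x :=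
  (LinearEquiv.ofBijective (coeLinearMap GS.grading) GS.internal).apply_symm_apply x

lemma decL_of_mem {p : ℤ × ZMod 2} {x : A} (hx : x ∈ GS.grading p) :
    GS.decL x = DirectSum.of (fun q => GS.grading q) p ⟨x, hx⟩ := by
  rw [decL, LinearEquiv.symm_apply_eq]
  exact (coeLinearMap_of GS.grading p ⟨x, hx⟩).symm

noncomputable def proj (p : ℤ × ZMod 2) : A →ₗ[k] A :=
  (GS.grading p).subtype ∘ₗ (DFinsupp.lapply p) ∘ₗ GS.decL.toLinearMap

lemma proj_apply (p : ℤ × ZMod 2) (x : A) : GS.proj p x = ↑(GS.decL x p) := rfl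

lemma proj_mem (p : ℤ × ZMod 2) (x : A) : GS.proj p x ∈ GS.grading p := (GS.decL x p).2

lemma proj_of_mem {p : ℤ × ZMod 2} {x : A} (hx : x ∈ GS.grading p) : GS.proj p x = x := by
  rw [proj_apply, GS.decL_of_mem hx, DirectSum.of_eq_same]

lemma proj_of_mem_ne {p q : ℤ × ZMod 2} {x : A} (hx : x ∈ GS.grading p) (h : p ≠ q) :
    GS.proj q x = 0 := by
  rw [proj_apply, GS.decL_of_mem hx, DirectSum.of_eq_of_ne _ _ _ h.symm]
  rfl

noncomputable def projP (P : ℤ × ZMod 2 → Prop) : A →ₗ[k] A :=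
  (coeLinearMap GS.grading) ∘ₗ
    (@DFinsupp.filterLinearMap _ k _ _ _ _ P (Classical.decPred P)) ∘ₗ GS.decL.toLinearMap

lemma projP_def (P : ℤ × ZMod 2 → Prop) [inst : DecidablePred P] (x : A) :
    GS.projP P x = coeLinearMap GS.grading (DFinsupp.filter P (GS.decL x)) := by
  show coeLinearMap GS.grading (@DFinsupp.filter _ _ _ P (Classical.decPred P) (GS.decL x)) = _
  rw [GS.filter_irrel (Classical.decPred P) inst]

lemma grading_le_piece {P : ℤ × ZMod 2 → Prop} {p : ℤ × ZMod 2} (hp : P p) :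
    GS.grading p ≤ GS.piece P :=
  le_iSup (fun q : {q : ℤ × ZMod 2 // P q} => GS.grading ↑q) ⟨p, hp⟩

lemma projP_add_projP_not (P : ℤ × ZMod 2 → Prop) (x : A) :
    GS.projP P x + GS.projP (fun p => ¬ P p) x = x := by
  classical
  rw [GS.projP_def P x, GS.projP_def (fun p => ¬ P p) x, ← map_add,
    DFinsupp.filter_pos_add_filter_neg (GS.decL x) P]
  exact GS.coe_decL x

lemma projP_mem_piece (P : ℤ × ZMod 2 → Prop) (x : A) : GS.projP P x ∈ GS.piece P := by
  classical
  rw [GS.projP_def P x, coeLinearMap_eq_dfinsuppSum]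
  refine dfinsuppSum_mem _ _ _ (fun q hq => ?_)
  have hq' : q ∈ (DFinsupp.filter P (GS.decL x)).support := by
    rw [DFinsupp.mem_support_iff]; exact hq
  rw [DFinsupp.support_filter, Finset.mem_filter] at hq'
  exact GS.grading_le_piece hq'.2 (DFinsupp.filter P (GS.decL x) q).2

lemma projP_of_mem {P : ℤ × ZMod 2 → Prop} {p : ℤ × ZMod 2} {x : A} [DecidablePred P]
    (hx : x ∈ GS.grading p) :
    GS.projP P x = if P p then x else 0 := by
  rw [GS.projP_def P x, GS.decL_of_mem hx]
  show (coeLinearMap GS.grading) (DFinsupp.filter P (DFinsupp.single p ⟨x, hx⟩)) = _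
  rw [DFinsupp.filter_single]
  split
  · exact coeLinearMap_of _ _ _
  · simp

lemma proj_eq_zero_of_piece {P : ℤ × ZMod 2 → Prop} {q : ℤ × ZMod 2} {x : A}
    (hx : x ∈ GS.piece P) (hq : ¬ P q) : GS.proj q x = 0 := by
  refine Submodule.iSup_induction _ (motive := fun y => GS.proj q y = 0) hx
    (fun p y hy => GS.proj_of_mem_ne hy ?_) (map_zero _) (fun y z hy hz => ?_)
  · rintro rfl; exact hq p.2
  · show GS.proj q (y + z) = 0
    rw [map_add]
    show GS.proj q y + GS.proj q z = 0
    rw [hy, hz, add_zero]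

lemma projP_eq_self_of_piece {P : ℤ × ZMod 2 → Prop} {x : A}
    (hx : x ∈ GS.piece P) : GS.projP P x = x := by
  classical
  refine Submodule.iSup_induction _ (motive := fun y => GS.projP P y = y) hx
    (fun p y hy => ?_) (map_zero _) (fun y z hy hz => ?_)
  · show GS.projP P y = y
    rw [GS.projP_of_mem hy, if_pos p.2]
  · show GS.projP P (y + z) = y + z
    rw [map_add]
    show GS.projP P y + GS.projP P z = y + z
    rw [hy, hz]

lemma projP_eq_zero_of_piece {P Q : ℤ × ZMod 2 → Prop} {x : A}
    (hx : x ∈ GS.piece Q) (hPQ : ∀ p, Q p → ¬ P p) : GS.projP P x = 0 := by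
  classical
  refine Submodule.iSup_induction _ (motive := fun y => GS.projP P y = 0) hx
    (fun p y hy => ?_) (map_zero _) (fun y z hy hz => ?_)
  · show GS.projP P y = 0
    rw [GS.projP_of_mem hy, if_neg (hPQ p p.2)]
  · show GS.projP P (y + z) = 0
    rw [map_add]
    show GS.projP P y + GS.projP P z = 0
    rw [hy, hz, add_zero]

lemma exists_finsupport (x : A) : ∃ S : Finset (ℤ × ZMod 2),
    (∀ q ∉ S, GS.proj q x = 0) ∧ x = ∑ p ∈ S, GS.proj p x := by
  classical
  refine ⟨(GS.decL x).support, fun q hq => ?_, ?_⟩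
  · rw [proj_apply]
    rw [DFinsupp.notMem_support_iff] at hq
    rw [hq]; rfl
  · conv_lhs => rw [← GS.coe_decL x]
    rw [coeLinearMap_eq_dfinsuppSum]
    rfl


/-! ### piece lemmas -/

lemma piece_le {P Q : ℤ × ZMod 2 → Prop} (h : ∀ p, P p → Q p) : GS.piece P ≤ GS.piece Q :=
  iSup_le fun p => GS.grading_le_piece (h p p.2)

lemma piece_congr {P Q : ℤ × ZMod 2 → Prop} (h : ∀ p, P p ↔ Q p) : GS.piece P = GS.piece Q :=
  le_antisymm (GS.piece_le fun p hp => (h p).1 hp) (GS.piece_le fun p hp => (h p).2 hp)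

lemma piece_sup (P Q : ℤ × ZMod 2 → Prop) :
    GS.piece (fun p => P p ∨ Q p) = GS.piece P ⊔ GS.piece Q := by
  refine le_antisymm (iSup_le fun p => ?_) (sup_le (GS.piece_le fun p hp => Or.inl hp)
    (GS.piece_le fun p hp => Or.inr hp))
  rcases p.2 with hp | hp
  · exact le_trans (GS.grading_le_piece hp) le_sup_left
  · exact le_trans (GS.grading_le_piece hp) le_sup_right

lemma mem_piece_true (x : A) : x ∈ GS.piece (fun _ => True) := by
  have h : (⊤ : Submodule k A) ≤ GS.piece (fun _ => True) := by
    rw [← GS.internal.submodule_iSup_eq_top]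
    exact iSup_le fun p => GS.grading_le_piece trivial
  exact h Submodule.mem_top

lemma piece_induction {P : ℤ × ZMod 2 → Prop} {C : A → Prop}
    (hhom : ∀ p, P p → ∀ x ∈ GS.grading p, C x) (h0 : C 0)
    (hadd : ∀ x y, C x → C y → C (x + y)) : ∀ x ∈ GS.piece P, C x := fun x hx =>
  Submodule.iSup_induction _ (motive := C) hx (fun p y hy => hhom p p.2 y hy) h0 hadd

lemma piece_induction₂ {P Q : ℤ × ZMod 2 → Prop} {C : A → A → Prop}
    (hhom : ∀ p q, P p → Q q → ∀ x ∈ GS.grading p, ∀ y ∈ GS.grading q, C x y)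
    (hx0 : ∀ y, C 0 y) (hy0 : ∀ x, C x 0)
    (haddl : ∀ x x' y, C x y → C x' y → C (x + x') y)
    (haddr : ∀ x y y', C x y → C x y' → C x (y + y')) :
    ∀ x ∈ GS.piece P, ∀ y ∈ GS.piece Q, C x y := by
  intro x hx
  refine GS.piece_induction (C := fun x => ∀ y ∈ GS.piece Q, C x y)
    (fun p hp x hx => GS.piece_induction (fun q hq y hy => hhom p q hp hq x hx y hy)
      (hy0 x) (fun y y' hy hy' => haddr x y y' hy hy'))
    (fun y hy => hx0 y)
    (fun x x' h1 h2 y hy => haddl x x' y (h1 y hy) (h2 y hy)) x hx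

lemma top_induction {C : A → Prop}
    (hhom : ∀ p, ∀ x ∈ GS.grading p, C x) (h0 : C 0)
    (hadd : ∀ x y, C x → C y → C (x + y)) : ∀ x, C x := fun x =>
  GS.piece_induction (fun p _ => hhom p) h0 hadd x (GS.mem_piece_true x)

/-! ### parity arithmetic -/

lemma zmod2_cases : ∀ s : ZMod 2, s = 0 ∨ s = 1 := by decide

lemma int_even_cast (m : ℤ) : Even m ↔ (m : ZMod 2) = 0 := by
  rw [ZMod.intCast_zmod_eq_zero_iff_dvd]
  constructor
  · rintro ⟨r, hr⟩; exact ⟨r, by omega⟩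
  · rintro ⟨r, hr⟩; exact ⟨r, by omega⟩

lemma int_odd_cast (m : ℤ) : Odd m ↔ (m : ZMod 2) = 1 := by
  rw [← Int.not_even_iff_odd, int_even_cast]
  rcases zmod2_cases (m : ZMod 2) with h | h <;> simp [h]

lemma pr_iff (p : ℤ × ZMod 2) :
    ((Even p.1 ∧ p.2 = 0) ∨ (Odd p.1 ∧ p.2 = 1)) ↔ (p.1 : ZMod 2) = p.2 := by
  rw [int_even_cast, int_odd_cast]
  rcases zmod2_cases (p.1 : ZMod 2) with h | h <;>
    rcases zmod2_cases p.2 with h' | h' <;> simp [h, h'] <;> decide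

lemma pn_iff (p : ℤ × ZMod 2) :
    ((Odd p.1 ∧ p.2 = 0) ∨ (Even p.1 ∧ p.2 = 1)) ↔ (p.1 : ZMod 2) = p.2 + 1 := by
  rw [int_even_cast, int_odd_cast]
  rcases zmod2_cases (p.1 : ZMod 2) with h | h <;>
    rcases zmod2_cases p.2 with h' | h' <;> simp [h, h'] <;> decide

/-! ### multiplication closure -/

lemma piece_mul_piece {P Q R' : ℤ × ZMod 2 → Prop} (h : ∀ p q, P p → Q q → R' (p + q)) :
    ∀ x ∈ GS.piece P, ∀ y ∈ GS.piece Q, x * y ∈ GS.piece R' := by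
  refine GS.piece_induction₂ (fun p q hp hq x hx y hy =>
      GS.grading_le_piece (h p q hp hq) (GS.mul_mem hx hy))
    (fun y => by rw [zero_mul]; exact zero_mem _) (fun x => by rw [mul_zero]; exact zero_mem _)
    (fun x x' y hx hx' => by rw [add_mul]; exact add_mem hx hx')
    (fun x y y' hy hy' => by rw [mul_add]; exact add_mem hy hy')

def Pn : ℤ × ZMod 2 → Prop := fun p => (Odd p.1 ∧ p.2 = 0) ∨ (Even p.1 ∧ p.2 = 1)

lemma Nsub_eq : GS.A0odd ⊔ GS.A1ev = GS.piece Pn :=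
  (GS.piece_sup (fun p => Odd p.1 ∧ p.2 = 0) (fun p => Even p.1 ∧ p.2 = 1)).symm

lemma zmod2_two : (1 + 1 : ZMod 2) = 0 := by decide

lemma R_mul_R : ∀ x ∈ GS.Rsub, ∀ y ∈ GS.Rsub, x * y ∈ GS.Rsub := by
  refine GS.piece_mul_piece (fun p q hp hq => ?_)
  replace hp := (pr_iff p).1 hp
  replace hq := (pr_iff q).1 hq
  refine (pr_iff _).2 ?_
  simp only [Prod.fst_add, Prod.snd_add]
  push_cast
  rw [hp, hq]

lemma R_mul_N : ∀ x ∈ GS.Rsub, ∀ y ∈ GS.piece Pn, x * y ∈ GS.piece Pn := by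
  refine GS.piece_mul_piece (fun p q hp hq => ?_)
  replace hp := (pr_iff p).1 hp
  replace hq := (pn_iff q).1 hq
  refine (pn_iff _).2 ?_
  simp only [Prod.fst_add, Prod.snd_add]
  push_cast
  rw [hp, hq]
  ring

lemma N_mul_R : ∀ x ∈ GS.piece Pn, ∀ y ∈ GS.Rsub, x * y ∈ GS.piece Pn := by
  refine GS.piece_mul_piece (fun p q hp hq => ?_)
  replace hp := (pn_iff p).1 hp
  replace hq := (pr_iff q).1 hq
  refine (pn_iff _).2 ?_
  simp only [Prod.fst_add, Prod.snd_add]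
  push_cast
  rw [hp, hq]
  ring

lemma N_mul_N : ∀ x ∈ GS.piece Pn, ∀ y ∈ GS.piece Pn, x * y ∈ GS.Rsub := by
  refine GS.piece_mul_piece (fun p q hp hq => ?_)
  replace hp := (pn_iff p).1 hp
  replace hq := (pn_iff q).1 hq
  refine (pr_iff _).2 ?_
  simp only [Prod.fst_add, Prod.snd_add]
  push_cast
  rw [hp, hq]
  linear_combination (zmod2_two)

/-! ### commutation -/

lemma comm' {p q : ℤ × ZMod 2} {x y : A} (hx : x ∈ GS.grading p) (hy : y ∈ GS.grading q) :
    x * y = ((-1 : k) ^ ((p.2 * q.2).val + (p.1 * q.1).natAbs)) • (y * x) :=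
  GS.comm (Prod.mk.eta.symm ▸ hx) (Prod.mk.eta.symm ▸ hy)

lemma comm_of_even {p q : ℤ × ZMod 2} {x y : A} (hx : x ∈ GS.grading p)
    (hy : y ∈ GS.grading q) (h : Even ((p.2 * q.2).val + (p.1 * q.1).natAbs)) :
    x * y = y * x := by
  rw [GS.comm' hx hy, h.neg_one_pow, one_smul]

lemma comm_of_odd {p q : ℤ × ZMod 2} {x y : A} (hx : x ∈ GS.grading p)
    (hy : y ∈ GS.grading q) (h : Odd ((p.2 * q.2).val + (p.1 * q.1).natAbs)) :
    x * y = -(y * x) := by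
  rw [GS.comm' hx hy, h.neg_one_pow, neg_one_smul]

lemma Rsub_comm : ∀ x ∈ GS.Rsub, ∀ y ∈ GS.Rsub, x * y = y * x := by
  refine GS.piece_induction₂ (fun p q hp hq x hx y hy => GS.comm_of_even hx hy ?_)
    (fun y => by rw [zero_mul, mul_zero]) (fun x => by rw [zero_mul, mul_zero])
    (fun x x' y h h' => by rw [add_mul, mul_add, h, h'])
    (fun x y y' h h' => by rw [mul_add, add_mul, h, h'])
  rcases hp with ⟨hm, hs⟩ | ⟨hm, hs⟩ <;> rcases hq with ⟨hn, ht⟩ | ⟨hn, ht⟩ <;>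
    rw [hs, ht]
  · rw [show ((0 : ZMod 2) * 0).val = 0 from rfl, zero_add]
    exact Int.natAbs_even.2 (hm.mul_right _)
  · rw [show ((0 : ZMod 2) * 1).val = 0 from rfl, zero_add]
    exact Int.natAbs_even.2 (hm.mul_right _)
  · rw [show ((1 : ZMod 2) * 0).val = 0 from rfl, zero_add]
    exact Int.natAbs_even.2 (hn.mul_left _)
  · rw [show ((1 : ZMod 2) * 1).val = 1 from rfl]
    exact odd_one.add_odd (Int.natAbs_odd.2 (hm.mul hn))

lemma A0odd_anticomm : ∀ x ∈ GS.A0odd, ∀ y ∈ GS.A0odd, x * y = -(y * x) := by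
  refine GS.piece_induction₂ (fun p q hp hq x hx y hy => GS.comm_of_odd hx hy ?_)
    (fun y => by rw [zero_mul, mul_zero, neg_zero]) (fun x => by rw [zero_mul, mul_zero, neg_zero])
    (fun x x' y h h' => by rw [add_mul, mul_add, h, h', neg_add])
    (fun x y y' h h' => by rw [mul_add, add_mul, h, h', neg_add])
  obtain ⟨hm, hs⟩ := hp; obtain ⟨hn, ht⟩ := hq
  rw [hs, ht, show ((0 : ZMod 2) * 0).val = 0 from rfl, zero_add]
  exact Int.natAbs_odd.2 (hm.mul hn)

lemma A1ev_anticomm : ∀ x ∈ GS.A1ev, ∀ y ∈ GS.A1ev, x * y = -(y * x) := by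
  refine GS.piece_induction₂ (fun p q hp hq x hx y hy => GS.comm_of_odd hx hy ?_)
    (fun y => by rw [zero_mul, mul_zero, neg_zero]) (fun x => by rw [zero_mul, mul_zero, neg_zero])
    (fun x x' y h h' => by rw [add_mul, mul_add, h, h', neg_add])
    (fun x y y' h h' => by rw [mul_add, add_mul, h, h', neg_add])
  obtain ⟨hm, hs⟩ := hp; obtain ⟨hn, ht⟩ := hq
  rw [hs, ht, show ((1 : ZMod 2) * 1).val = 1 from rfl]
  rw [Nat.odd_add]
  simp [Int.natAbs_even.2 (hm.mul_right _)]

lemma de_comm : ∀ x ∈ GS.A0odd, ∀ y ∈ GS.A1ev, x * y = y * x := by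
  refine GS.piece_induction₂ (fun p q hp hq x hx y hy => GS.comm_of_even hx hy ?_)
    (fun y => by rw [zero_mul, mul_zero]) (fun x => by rw [zero_mul, mul_zero])
    (fun x x' y h h' => by rw [add_mul, mul_add, h, h'])
    (fun x y y' h h' => by rw [mul_add, add_mul, h, h'])
  obtain ⟨hm, hs⟩ := hp; obtain ⟨hn, ht⟩ := hq
  rw [hs, ht, show ((0 : ZMod 2) * 1).val = 0 from rfl, zero_add]
  exact Int.natAbs_even.2 (hn.mul_left _)

/-! ### the parity involution θ -/

noncomputable def theta : A →ₗ[k] A :=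
  GS.projP (fun p => Even p.1) - GS.projP (fun p => Odd p.1)

lemma theta_of_mem_even {p : ℤ × ZMod 2} {x : A} (hx : x ∈ GS.grading p) (h : Even p.1) :
    GS.theta x = x := by
  classical
  show GS.projP (fun p => Even p.1) x - GS.projP (fun p => Odd p.1) x = x
  rw [GS.projP_of_mem hx, GS.projP_of_mem hx, if_pos h,
    if_neg (Int.not_odd_iff_even.2 h), sub_zero]

lemma theta_of_mem_odd {p : ℤ × ZMod 2} {x : A} (hx : x ∈ GS.grading p) (h : Odd p.1) :
    GS.theta x = -x := by
  classical
  show GS.projP (fun p => Even p.1) x - GS.projP (fun p => Odd p.1) x = -x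
  rw [GS.projP_of_mem hx, GS.projP_of_mem hx, if_pos h,
    if_neg (Int.not_even_iff_odd.2 h), zero_sub]

lemma theta_theta (x : A) : GS.theta (GS.theta x) = x := by
  refine GS.top_induction (C := fun x => GS.theta (GS.theta x) = x) (fun p x hx => ?_)
    (by show GS.theta (GS.theta (0 : A)) = 0; rw [map_zero, map_zero])
    (fun x y hx hy => by
      have hx' : GS.theta (GS.theta x) = x := hx
      have hy' : GS.theta (GS.theta y) = y := hy
      show GS.theta (GS.theta (x + y)) = x + y
      rw [map_add, map_add, hx', hy']) x
  show GS.theta (GS.theta x) = x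
  rcases Int.even_or_odd p.1 with h | h
  · rw [GS.theta_of_mem_even hx h, GS.theta_of_mem_even hx h]
  · rw [GS.theta_of_mem_odd hx h, map_neg, GS.theta_of_mem_odd hx h, neg_neg]

lemma theta_mul (x y : A) : GS.theta (x * y) = GS.theta x * GS.theta y := by
  refine GS.piece_induction₂ (P := fun _ => True) (Q := fun _ => True)
    (C := fun x y => GS.theta (x * y) = GS.theta x * GS.theta y)
    (fun p q _ _ x hx y hy => ?_)
    (fun y => by show GS.theta (0 * y) = GS.theta 0 * GS.theta y
                 rw [zero_mul, map_zero, zero_mul])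
    (fun x => by show GS.theta (x * 0) = GS.theta x * GS.theta 0
                 rw [mul_zero, map_zero, mul_zero])
    (fun x x' y h h' => by
      have h1 : GS.theta (x * y) = GS.theta x * GS.theta y := h
      have h2 : GS.theta (x' * y) = GS.theta x' * GS.theta y := h'
      show GS.theta ((x + x') * y) = GS.theta (x + x') * GS.theta y
      rw [add_mul, map_add, map_add, h1, h2, add_mul])
    (fun x y y' h h' => by
      have h1 : GS.theta (x * y) = GS.theta x * GS.theta y := h
      have h2 : GS.theta (x * y') = GS.theta x * GS.theta y' := h'
      show GS.theta (x * (y + y')) = GS.theta x * GS.theta (y + y')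
      rw [mul_add, map_add, map_add, h1, h2, mul_add])
    x (GS.mem_piece_true x) y (GS.mem_piece_true y)
  show GS.theta (x * y) = GS.theta x * GS.theta y
  have hxy : x * y ∈ GS.grading (p + q) := GS.mul_mem hx hy
  have h1 : (p + q).1 = p.1 + q.1 := rfl
  rcases Int.even_or_odd p.1 with h | h <;> rcases Int.even_or_odd q.1 with h' | h'
  · rw [GS.theta_of_mem_even hx h, GS.theta_of_mem_even hy h',
      GS.theta_of_mem_even hxy (by rw [h1]; exact h.add h')]
  · rw [GS.theta_of_mem_even hx h, GS.theta_of_mem_odd hy h',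
      GS.theta_of_mem_odd hxy (by rw [h1]; exact h.add_odd h'), mul_neg]
  · rw [GS.theta_of_mem_odd hx h, GS.theta_of_mem_even hy h',
      GS.theta_of_mem_odd hxy (by rw [h1]; exact h.add_even h'), neg_mul]
  · rw [GS.theta_of_mem_odd hx h, GS.theta_of_mem_odd hy h',
      GS.theta_of_mem_even hxy (by rw [h1]; exact h.add_odd h'), neg_mul_neg]

lemma theta_one : GS.theta 1 = 1 :=
  GS.theta_of_mem_even GS.one_mem (Even.zero)

lemma theta_pow (x : A) (n : ℕ) : GS.theta (x ^ n) = (GS.theta x) ^ n := by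
  induction n with
  | zero => rw [pow_zero, pow_zero, theta_one]
  | succ n ih => rw [pow_succ, pow_succ, GS.theta_mul, ih]

lemma theta_mem_Rsub : ∀ x ∈ GS.Rsub, GS.theta x ∈ GS.Rsub := by
  refine GS.piece_induction (fun p hp x hx => ?_) (by rw [map_zero]; exact zero_mem _)
    (fun x y hx hy => by rw [map_add]; exact add_mem hx hy)
  rcases Int.even_or_odd p.1 with h | h
  · rw [GS.theta_of_mem_even hx h]; exact GS.grading_le_piece hp hx
  · rw [GS.theta_of_mem_odd hx h]; exact neg_mem (GS.grading_le_piece hp hx)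

lemma zswap : ∀ z ∈ GS.piece Pn, ∀ r ∈ GS.Rsub, z * r = GS.theta r * z := by
  refine GS.piece_induction₂ (C := fun z r => z * r = GS.theta r * z)
    (fun q p hq hp z hz r hr => ?_)
    (fun r => by show (0 : A) * r = GS.theta r * 0; rw [zero_mul, mul_zero])
    (fun z => by show z * 0 = GS.theta 0 * z; rw [mul_zero, map_zero, zero_mul])
    (fun z z' r h h' => by
      have h1 : z * r = GS.theta r * z := h
      have h2 : z' * r = GS.theta r * z' := h'
      show (z + z') * r = GS.theta r * (z + z')
      rw [add_mul, mul_add, h1, h2])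
    (fun z r r' h h' => by
      have h1 : z * r = GS.theta r * z := h
      have h2 : z * r' = GS.theta r' * z := h'
      show z * (r + r') = GS.theta (r + r') * z
      rw [mul_add, map_add, add_mul, h1, h2])
  show z * r = GS.theta r * z
  rcases hp with ⟨hm, hs⟩ | ⟨hm, hs⟩
  · rw [GS.theta_of_mem_even hr hm]
    refine GS.comm_of_even hz hr ?_
    rw [hs, mul_zero, show ((0 : ZMod 2)).val = 0 from rfl, zero_add]
    exact Int.natAbs_even.2 (hm.mul_left _)
  · rw [GS.theta_of_mem_odd hr hm]
    rw [neg_mul]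
    refine GS.comm_of_odd hz hr ?_
    rcases hq with ⟨hn, ht⟩ | ⟨hn, ht⟩
    · rw [hs, ht, show ((0 : ZMod 2) * 1).val = 0 from rfl, zero_add]
      exact Int.natAbs_odd.2 (hn.mul hm)
    · rw [hs, ht, show ((1 : ZMod 2) * 1).val = 1 from rfl]
      rw [Nat.odd_add]
      simp [Int.natAbs_even.2 (hn.mul_right _)]

/-! ### squares and fourth powers of odd elements -/

variable {GS}

lemma sq_zero_of_anticomm (h2 : (2 : k) ≠ 0) {x : A} (h : x * x = -(x * x)) : x * x = 0 := by
  have h' : (2 : k) • (x * x) = 0 := by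
    rw [two_smul]
    nth_rewrite 2 [h]
    rw [add_neg_cancel]
  rcases smul_eq_zero.1 h' with h'' | h''
  · exact absurd h'' h2
  · exact h''

lemma A0odd_le_N : GS.A0odd ≤ GS.piece Pn := GS.piece_le (fun p hp => Or.inl hp)
lemma A1ev_le_N : GS.A1ev ≤ GS.piece Pn := GS.piece_le (fun p hp => Or.inr hp)

lemma z_sq (h2 : (2 : k) ≠ 0) {d e : A} (hd : d ∈ GS.A0odd) (he : e ∈ GS.A1ev) :
    (d + e) * (d + e) = e * d + e * d := by
  have hdd : d * d = 0 := sq_zero_of_anticomm h2 (GS.A0odd_anticomm d hd d hd)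
  have hee : e * e = 0 := sq_zero_of_anticomm h2 (GS.A1ev_anticomm e he e he)
  have hde : d * e = e * d := GS.de_comm d hd e he
  rw [add_mul, mul_add, mul_add, hdd, hee, hde, zero_add, add_zero]

lemma ed_sq {d e : A} (hd : d ∈ GS.A0odd) (he : e ∈ GS.A1ev)
    (hdd : d * d = 0) (hee : e * e = 0) : (e * d) * (e * d) = 0 := by
  have hde : d * e = e * d := GS.de_comm d hd e he
  calc (e * d) * (e * d) = e * ((d * e) * d) := by rw [mul_assoc, ← mul_assoc d]
    _ = e * (e * (d * d)) := by rw [hde, mul_assoc]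
    _ = 0 := by rw [hdd, mul_zero, mul_zero]

lemma z_pow_four (h2 : (2 : k) ≠ 0) {z : A} (hz : z ∈ GS.A0odd ⊔ GS.A1ev) : z ^ 4 = 0 := by
  obtain ⟨d, hd, e, he, hde⟩ := Submodule.mem_sup.1 hz
  subst hde
  have hdd : d * d = 0 := sq_zero_of_anticomm h2 (GS.A0odd_anticomm d hd d hd)
  have hee : e * e = 0 := sq_zero_of_anticomm h2 (GS.A1ev_anticomm e he e he)
  have h1 : (d + e) * (d + e) = e * d + e * d := z_sq h2 hd he
  have h0 : (e * d) * (e * d) = 0 := ed_sq hd he hdd hee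
  have : (4 : ℕ) = 2 + 2 := rfl
  rw [this, pow_add, pow_two, h1, add_mul, mul_add]
  simp [h0]

/-- a product of two "odd" (in the super sense) elements has fifth power zero -/
lemma nn_pow_five (h2 : (2 : k) ≠ 0) {z w : A} (hz : z ∈ GS.A0odd ⊔ GS.A1ev)
    (hw : w ∈ GS.A0odd ⊔ GS.A1ev) : (z * w) ^ 5 = 0 := by
  obtain ⟨d1, hd1, e1, he1, h1⟩ := Submodule.mem_sup.1 hz
  obtain ⟨d2, hd2, e2, he2, h2'⟩ := Submodule.mem_sup.1 hw
  subst h1; subst h2'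
  -- the four products lie in R and pairwise commute
  have hd1N := A0odd_le_N hd1
  have hd2N := A0odd_le_N hd2
  have he1N := A1ev_le_N he1
  have he2N := A1ev_le_N he2
  have ha : d1 * d2 ∈ GS.Rsub := GS.N_mul_N _ hd1N _ hd2N
  have hb : d1 * e2 ∈ GS.Rsub := GS.N_mul_N _ hd1N _ he2N
  have hc : e1 * d2 ∈ GS.Rsub := GS.N_mul_N _ he1N _ hd2N
  have hd : e1 * e2 ∈ GS.Rsub := GS.N_mul_N _ he1N _ he2N
  have hd2sq : d2 * d2 = 0 := sq_zero_of_anticomm h2 (GS.A0odd_anticomm d2 hd2 d2 hd2)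
  have he2sq : e2 * e2 = 0 := sq_zero_of_anticomm h2 (GS.A1ev_anticomm e2 he2 e2 he2)
  -- squares of the four products vanish
  have haa : (d1 * d2) * (d1 * d2) = 0 := by
    have h21 : d2 * d1 = -(d1 * d2) := GS.A0odd_anticomm d2 hd2 d1 hd1
    calc (d1 * d2) * (d1 * d2) = d1 * ((d2 * d1) * d2) := by rw [mul_assoc, ← mul_assoc d2]
      _ = -(d1 * (d1 * (d2 * d2))) := by rw [h21, neg_mul, mul_neg, mul_assoc]
      _ = 0 := by rw [hd2sq, mul_zero, mul_zero, neg_zero]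
  have hbb : (d1 * e2) * (d1 * e2) = 0 := by
    have h21 : e2 * d1 = d1 * e2 := (GS.de_comm d1 hd1 e2 he2).symm
    calc (d1 * e2) * (d1 * e2) = d1 * ((e2 * d1) * e2) := by rw [mul_assoc, ← mul_assoc e2]
      _ = d1 * (d1 * (e2 * e2)) := by rw [h21, mul_assoc]
      _ = 0 := by rw [he2sq, mul_zero, mul_zero]
  have hcc : (e1 * d2) * (e1 * d2) = 0 := by
    have h21 : d2 * e1 = e1 * d2 := GS.de_comm d2 hd2 e1 he1
    calc (e1 * d2) * (e1 * d2) = e1 * ((d2 * e1) * d2) := by rw [mul_assoc, ← mul_assoc d2]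
      _ = e1 * (e1 * (d2 * d2)) := by rw [h21, mul_assoc]
      _ = 0 := by rw [hd2sq, mul_zero, mul_zero]
  have hdd : (e1 * e2) * (e1 * e2) = 0 := by
    have h21 : e2 * e1 = -(e1 * e2) := GS.A1ev_anticomm e2 he2 e1 he1
    calc (e1 * e2) * (e1 * e2) = e1 * ((e2 * e1) * e2) := by rw [mul_assoc, ← mul_assoc e2]
      _ = -(e1 * (e1 * (e2 * e2))) := by rw [h21, neg_mul, mul_neg, mul_assoc]
      _ = 0 := by rw [he2sq, mul_zero, mul_zero, neg_zero]
  -- group into x + y with x^3 = y^3 = 0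
  set a := d1 * d2 with ha'
  set b := d1 * e2 with hb'
  set c := e1 * d2 with hc'
  set d := e1 * e2 with hd'
  have cube_zero : ∀ u v : A, u * v = v * u → u * u = 0 → v * v = 0 →
      (u + v) * (u + v) * (u + v) = 0 := by
    intro u v huv huu hvv
    have h1 : (u + v) * (u + v) = u * v + u * v := by
      rw [add_mul, mul_add, mul_add, huu, hvv, ← huv, zero_add, add_zero]
    have hh2 : (u * v) * u = 0 := by rw [mul_assoc, ← huv, ← mul_assoc, huu, zero_mul]
    have hh3 : (u * v) * v = 0 := by rw [mul_assoc, hvv, mul_zero]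
    rw [h1, add_mul, mul_add]
    simp [hh2, hh3]
  have hx3 : (a + b) * (a + b) * (a + b) = 0 :=
    cube_zero a b (GS.Rsub_comm a ha b hb) haa hbb
  have hy3 : (c + d) * (c + d) * (c + d) = 0 :=
    cube_zero c d (GS.Rsub_comm c hc d hd) hcc hdd
  have hzw : (d1 + e1) * (d2 + e2) = (a + b) + (c + d) := by
    rw [add_mul, mul_add, mul_add]
  rw [hzw]
  set x := a + b
  set y := c + d
  have hxy : Commute x y := GS.Rsub_comm x (add_mem ha hb) y (add_mem hc hd)
  rw [hxy.add_pow]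
  refine Finset.sum_eq_zero (fun i hi => ?_)
  have hi5 : i ≤ 5 := by
    rw [Finset.mem_range] at hi; omega
  rcases le_or_gt i 2 with h | h
  · have h3 : 5 - i = 3 + (2 - i) := by omega
    have hcube : y ^ 3 = y * y * y := by rw [pow_succ, pow_two]
    have : y ^ (5 - i) = 0 := by
      rw [h3, pow_add, hcube, hy3, zero_mul]
    rw [this, mul_zero, zero_mul]
  · have h3 : i = 3 + (i - 3) := by omega
    have hcube : x ^ 3 = x * x * x := by rw [pow_succ, pow_two]
    have : x ^ i = 0 := by
      rw [h3, pow_add, hcube, hx3, zero_mul]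
    rw [this, zero_mul, zero_mul]

/-! ### the expansion lemma -/

section Expansion

variable {r r' z : A}

def monSet (r r' z : A) (t : ℕ) : Set A :=
  {w : A | ∃ a b j : ℕ, a + b + j = t ∧ 1 ≤ j ∧ j ≤ 3 ∧ w = r ^ a * (r' ^ b * z ^ j)}

lemma swap_pow (hzr : z * r = r' * z) (hzr' : z * r' = r * z) (j : ℕ) :
    (z ^ j * r = r * z ^ j ∧ z ^ j * r' = r' * z ^ j) ∨
      (z ^ j * r = r' * z ^ j ∧ z ^ j * r' = r * z ^ j) := by
  induction j with
  | zero => left; constructor <;> rw [pow_zero, one_mul, mul_one]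
  | succ j ih =>
    rcases ih with ⟨h1, h2⟩ | ⟨h1, h2⟩
    · right
      constructor
      · rw [pow_succ', mul_assoc, h1, ← mul_assoc, hzr, mul_assoc, ← pow_succ']
      · rw [pow_succ', mul_assoc, h2, ← mul_assoc, hzr', mul_assoc, ← pow_succ']
    · left
      constructor
      · rw [pow_succ', mul_assoc, h1, ← mul_assoc, hzr', mul_assoc, ← pow_succ']
      · rw [pow_succ', mul_assoc, h2, ← mul_assoc, hzr, mul_assoc, ← pow_succ']

lemma mon_mul_r (hzr : z * r = r' * z) (hzr' : z * r' = r * z) (hrr' : r * r' = r' * r)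
    {t : ℕ} {m : A} (hm : m ∈ Submodule.span k (monSet r r' z t)) :
    m * r ∈ Submodule.span k (monSet r r' z (t + 1)) := by
  refine Submodule.span_induction (p := fun m _ => m * r ∈ Submodule.span k (monSet r r' z (t + 1)))
    (fun w hw => ?_)
    (by show (0 : A) * r ∈ _; rw [zero_mul]; exact zero_mem _)
    (fun u v _ _ hu hv => by
      have hu' : u * r ∈ Submodule.span k (monSet r r' z (t + 1)) := hu
      have hv' : v * r ∈ Submodule.span k (monSet r r' z (t + 1)) := hv
      show (u + v) * r ∈ _
      rw [add_mul]; exact add_mem hu' hv')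
    (fun a u _ hu => by
      have hu' : u * r ∈ Submodule.span k (monSet r r' z (t + 1)) := hu
      show (a • u) * r ∈ _
      rw [smul_mul_assoc]; exact Submodule.smul_mem _ _ hu') hm
  obtain ⟨a, b, j, habj, hj1, hj3, rfl⟩ := hw
  show r ^ a * (r' ^ b * z ^ j) * r ∈ _
  have hassoc : r ^ a * (r' ^ b * z ^ j) * r = r ^ a * (r' ^ b * (z ^ j * r)) := by
    rw [mul_assoc, mul_assoc]
  rcases swap_pow hzr hzr' j with ⟨h1, _⟩ | ⟨h1, _⟩
  · -- z^j * r = r * z^j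
    have hcomm : r' ^ b * r = r * r' ^ b := ((Commute.pow_right hrr' b)).symm
    have : r ^ a * (r' ^ b * z ^ j) * r = r ^ (a + 1) * (r' ^ b * z ^ j) := by
      rw [hassoc, h1, ← mul_assoc (r' ^ b), hcomm, mul_assoc, ← mul_assoc, ← pow_succ]
    rw [this]
    exact Submodule.subset_span ⟨a + 1, b, j, by omega, hj1, hj3, rfl⟩
  · -- z^j * r = r' * z^j
    have : r ^ a * (r' ^ b * z ^ j) * r = r ^ a * (r' ^ (b + 1) * z ^ j) := by
      rw [hassoc, h1, ← mul_assoc (r' ^ b), ← pow_succ]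
    rw [this]
    exact Submodule.subset_span ⟨a, b + 1, j, by omega, hj1, hj3, rfl⟩

lemma mon_mul_z (hz4 : z ^ 4 = 0) {t : ℕ} {m : A}
    (hm : m ∈ Submodule.span k (monSet r r' z t)) :
    m * z ∈ Submodule.span k (monSet r r' z (t + 1)) := by
  refine Submodule.span_induction (p := fun m _ => m * z ∈ Submodule.span k (monSet r r' z (t + 1)))
    (fun w hw => ?_)
    (by show (0 : A) * z ∈ _; rw [zero_mul]; exact zero_mem _)
    (fun u v _ _ hu hv => by
      have hu' : u * z ∈ Submodule.span k (monSet r r' z (t + 1)) := hu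
      have hv' : v * z ∈ Submodule.span k (monSet r r' z (t + 1)) := hv
      show (u + v) * z ∈ _
      rw [add_mul]; exact add_mem hu' hv')
    (fun a u _ hu => by
      have hu' : u * z ∈ Submodule.span k (monSet r r' z (t + 1)) := hu
      show (a • u) * z ∈ _
      rw [smul_mul_assoc]; exact Submodule.smul_mem _ _ hu') hm
  obtain ⟨a, b, j, habj, hj1, hj3, rfl⟩ := hw
  show r ^ a * (r' ^ b * z ^ j) * z ∈ _
  have hassoc : r ^ a * (r' ^ b * z ^ j) * z = r ^ a * (r' ^ b * z ^ (j + 1)) := by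
    rw [mul_assoc, mul_assoc, ← pow_succ]
  rw [hassoc]
  rcases le_or_gt (j + 1) 3 with h | h
  · exact Submodule.subset_span ⟨a, b, j + 1, by omega, by omega, h, rfl⟩
  · have hj : j + 1 = 4 := by omega
    rw [hj, hz4, mul_zero, mul_zero]
    exact zero_mem _

lemma exp_lemma (hzr : z * r = r' * z) (hzr' : z * r' = r * z) (hrr' : r * r' = r' * r)
    (hz4 : z ^ 4 = 0) (t : ℕ) :
    ∃ m ∈ Submodule.span k (monSet r r' z t), (r + z) ^ t = r ^ t + m := by
  induction t with
  | zero => exact ⟨0, zero_mem _, by rw [pow_zero, pow_zero, add_zero]⟩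
  | succ t ih =>
    obtain ⟨m, hm, hexp⟩ := ih
    refine ⟨r ^ t * z + (m * r + m * z), ?_, ?_⟩
    · refine add_mem (Submodule.subset_span ⟨t, 0, 1, by omega, le_refl _, by omega, ?_⟩)
        (add_mem (mon_mul_r hzr hzr' hrr' hm) (mon_mul_z hz4 hm))
      rw [pow_zero, one_mul, pow_one]
    · rw [pow_succ, hexp, add_mul, mul_add, mul_add, ← pow_succ]
      abel

end Expansion

/-! ### predicates -/

def Pr : ℤ × ZMod 2 → Prop := fun p => (Even p.1 ∧ p.2 = 0) ∨ (Odd p.1 ∧ p.2 = 1)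

lemma Rsub_eq_piece : GS.Rsub = GS.piece Pr := rfl

lemma not_pr_iff_pn (p : ℤ × ZMod 2) : ¬ Pr p ↔ Pn p := by
  rw [show (Pr p ↔ (p.1 : ZMod 2) = p.2) from pr_iff p,
    show (Pn p ↔ (p.1 : ZMod 2) = p.2 + 1) from pn_iff p]
  rcases zmod2_cases (p.1 : ZMod 2) with h | h <;> rcases zmod2_cases p.2 with h' | h' <;>
    rw [h, h'] <;> decide

lemma pn_not_pr (p : ℤ × ZMod 2) (h : Pn p) : ¬ Pr p := (not_pr_iff_pn p).2 h

lemma one_mem_Rsub : (1 : A) ∈ GS.Rsub :=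
  GS.grading_le_piece (Or.inl ⟨Even.zero, rfl⟩) GS.one_mem

lemma Rsub_pow {x : A} (hx : x ∈ GS.Rsub) (n : ℕ) : x ^ n ∈ GS.Rsub := by
  induction n with
  | zero => rw [pow_zero]; exact GS.one_mem_Rsub
  | succ n ih => rw [pow_succ]; exact GS.R_mul_R _ ih _ hx

/-! ### J-dependent lemmas -/

section WithJ

variable (J : Submodule k A)

lemma proj_mem_J (hJhom : GS.IsHomogeneous J) {x : A} (hx : x ∈ J) (p : ℤ × ZMod 2) :
    GS.proj p x ∈ J := by
  have hle : J ≤ Submodule.comap (GS.proj p) J := by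
    nth_rewrite 1 [hJhom]
    rw [Submodule.span_le]
    rintro y ⟨hyJ, q, hyq⟩
    simp only [SetLike.mem_coe, Submodule.mem_comap]
    by_cases h : q = p
    · subst h; rw [GS.proj_of_mem hyq]; exact hyJ
    · rw [GS.proj_of_mem_ne hyq h]; exact zero_mem _
  exact hle hx

lemma projP_mem_J (hJhom : GS.IsHomogeneous J) (P : ℤ × ZMod 2 → Prop) {x : A} (hx : x ∈ J) :
    GS.projP P x ∈ J := by
  classical
  have hle : J ≤ Submodule.comap (GS.projP P) J := by
    nth_rewrite 1 [hJhom]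
    rw [Submodule.span_le]
    rintro y ⟨hyJ, q, hyq⟩
    simp only [SetLike.mem_coe, Submodule.mem_comap]
    rw [GS.projP_of_mem hyq]
    split
    · exact hyJ
    · exact zero_mem _
  exact hle hx

lemma theta_mem_J (hJhom : GS.IsHomogeneous J) {x : A} (hx : x ∈ J) : GS.theta x ∈ J := by
  have : GS.theta x = GS.projP (fun p => Even p.1) x - GS.projP (fun p => Odd p.1) x := rfl
  rw [this]
  exact sub_mem (GS.projP_mem_J J hJhom _ hx) (GS.projP_mem_J J hJhom _ hx)

variable (hJideal : ∀ a : A, ∀ x ∈ J, a * x ∈ J ∧ x * a ∈ J)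

/-- the radical of `J ∩ R` inside the commutative ring `R` -/
def radR (hJideal : ∀ a : A, ∀ x ∈ J, a * x ∈ J ∧ x * a ∈ J) : Submodule k A where
  carrier := {x : A | x ∈ GS.Rsub ∧ ∃ n : ℕ, x ^ n ∈ J}
  zero_mem' := ⟨zero_mem _, 1, by rw [pow_one]; exact zero_mem _⟩
  smul_mem' := fun c x hx => ⟨Submodule.smul_mem _ _ hx.1, by
    obtain ⟨n, hn⟩ := hx.2
    exact ⟨n, by rw [smul_pow]; exact Submodule.smul_mem _ _ hn⟩⟩
  add_mem' := by
    rintro x y ⟨hxR, mx, hmx⟩ ⟨hyR, my, hmy⟩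
    refine ⟨add_mem hxR hyR, mx + my, ?_⟩
    have hc : Commute x y := GS.Rsub_comm x hxR y hyR
    rw [hc.add_pow]
    refine Submodule.sum_mem _ (fun i hi => ?_)
    rcases le_or_gt mx i with h | h
    · have hxi : x ^ i = x ^ (i - mx) * x ^ mx := by rw [← pow_add]; congr 1; omega
      have h1 : x ^ mx * y ^ (mx + my - i) ∈ J := (hJideal _ _ hmx).2
      have h2 : x ^ (i - mx) * (x ^ mx * y ^ (mx + my - i)) ∈ J := (hJideal _ _ h1).1
      have h3 : x ^ (i - mx) * (x ^ mx * y ^ (mx + my - i)) * ((mx + my).choose i : A) ∈ J :=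
        (hJideal _ _ h2).2
      rw [hxi, mul_assoc (x ^ (i - mx)) (x ^ mx) (y ^ (mx + my - i))]
      exact h3
    · have hyj : y ^ (mx + my - i) = y ^ my * y ^ (mx + my - i - my) := by
        rw [← pow_add]; congr 1; omega
      have h1 : x ^ i * y ^ my ∈ J := (hJideal _ _ hmy).1
      have h2 : x ^ i * y ^ my * y ^ (mx + my - i - my) ∈ J := (hJideal _ _ h1).2
      have h3 : x ^ i * y ^ my * y ^ (mx + my - i - my) * ((mx + my).choose i : A) ∈ J :=
        (hJideal _ _ h2).2
      rw [hyj, ← mul_assoc (x ^ i) (y ^ my) (y ^ (mx + my - i - my))]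
      exact h3

lemma mem_radR_iff {x : A} :
    x ∈ GS.radR J hJideal ↔ x ∈ GS.Rsub ∧ ∃ n : ℕ, x ^ n ∈ J := Iff.rfl

/-- forward direction: an element of `√(J∩R) + N` has a power in `J`. -/
lemma forward_pow (hJideal : ∀ a : A, ∀ x ∈ J, a * x ∈ J ∧ x * a ∈ J)
    (h2 : (2 : k) ≠ 0) (hJhom : GS.IsHomogeneous J) {y z : A}
    (hy : y ∈ GS.Rsub) {m : ℕ} (hmy : y ^ m ∈ J) (hz : z ∈ GS.A0odd ⊔ GS.A1ev) :
    (y + z) ^ (2 * m + 2) ∈ J := by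
  have hzN : z ∈ GS.piece Pn := by rw [← GS.Nsub_eq]; exact hz
  have hty : GS.theta y ∈ GS.Rsub := GS.theta_mem_Rsub y hy
  have hzr : z * y = GS.theta y * z := GS.zswap z hzN y hy
  have hzr' : z * GS.theta y = y * z := by
    rw [GS.zswap z hzN _ hty, GS.theta_theta]
  have hrr' : y * GS.theta y = GS.theta y * y := GS.Rsub_comm y hy _ hty
  have hz4 : z ^ 4 = 0 := z_pow_four h2 hz
  obtain ⟨mm, hmm, hexp⟩ := exp_lemma (k := k) hzr hzr' hrr' hz4 (2 * m + 2)
  rw [hexp]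
  refine add_mem ?_ ?_
  · have : y ^ (2 * m + 2) = y ^ m * y ^ (m + 2) := by rw [← pow_add]; congr 1; omega
    rw [this]
    exact (hJideal _ _ hmy).2
  · -- every monomial with a+b+j = 2m+2, j ≤ 3 lies in J
    have htm : (GS.theta y) ^ m ∈ J := by
      rw [← GS.theta_pow]
      exact GS.theta_mem_J J hJhom hmy
    have hle : Submodule.span k (monSet y (GS.theta y) z (2 * m + 2)) ≤ J := by
      rw [Submodule.span_le]
      rintro w ⟨a, b, j, habj, hj1, hj3, rfl⟩
      rcases le_or_gt m a with h | h
      · have hxa : y ^ a = y ^ (a - m) * y ^ m := by rw [← pow_add]; congr 1; omega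
        have h1 : y ^ m * ((GS.theta y) ^ b * z ^ j) ∈ J := (hJideal _ _ hmy).2
        have h2 : y ^ (a - m) * (y ^ m * ((GS.theta y) ^ b * z ^ j)) ∈ J := (hJideal _ _ h1).1
        rw [hxa, mul_assoc]
        exact h2
      · have hb : m ≤ b := by omega
        have hxb : (GS.theta y) ^ b = (GS.theta y) ^ m * (GS.theta y) ^ (b - m) := by
          rw [← pow_add]; congr 1; omega
        have h1 : (GS.theta y) ^ m * ((GS.theta y) ^ (b - m) * z ^ j) ∈ J :=
          (hJideal _ _ htm).2
        have h2 : y ^ a * ((GS.theta y) ^ m * ((GS.theta y) ^ (b - m) * z ^ j)) ∈ J :=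
          (hJideal _ _ h1).1
        rw [hxb, mul_assoc]
        exact h2
    exact hle hmm

/-- reverse direction: if `x ^ n ∈ J` then the `R`-component of `x` is in `√(J∩R)`
and the rest is in `A₀ᵒᵈᵈ ⊔ A₁ᵉᵛ`. -/
lemma reverse_pow (hJideal : ∀ a : A, ∀ x ∈ J, a * x ∈ J ∧ x * a ∈ J)
    (h2 : (2 : k) ≠ 0) (hJhom : GS.IsHomogeneous J) {x : A} {n : ℕ} (hx : x ^ n ∈ J) :
    GS.projP Pr x ∈ GS.radR J hJideal ∧ x - GS.projP Pr x ∈ GS.A0odd ⊔ GS.A1ev := by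
  set r := GS.projP Pr x with hr
  have hrR : r ∈ GS.Rsub := GS.projP_mem_piece Pr x
  set z := x - r with hzdef
  have hzN' : z ∈ GS.piece (fun p => ¬ Pr p) := by
    have h := GS.projP_add_projP_not Pr x
    have : z = GS.projP (fun p => ¬ Pr p) x := by
      rw [hzdef, sub_eq_iff_eq_add']; exact h.symm
    rw [this]
    exact GS.projP_mem_piece _ x
  have hzPn : z ∈ GS.piece Pn := by
    rw [← GS.piece_congr not_pr_iff_pn]; exact hzN'
  have hzsup : z ∈ GS.A0odd ⊔ GS.A1ev := by rw [GS.Nsub_eq]; exact hzPn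
  refine ⟨⟨hrR, ?_⟩, hzsup⟩
  have hty : GS.theta r ∈ GS.Rsub := GS.theta_mem_Rsub r hrR
  have hzr : z * r = GS.theta r * z := GS.zswap z hzPn r hrR
  have hzr' : z * GS.theta r = r * z := by
    rw [GS.zswap z hzPn _ hty, GS.theta_theta]
  have hrr' : r * GS.theta r = GS.theta r * r := GS.Rsub_comm r hrR _ hty
  have hz4 : z ^ 4 = 0 := z_pow_four h2 hzsup
  obtain ⟨m, hm, hexp⟩ := exp_lemma (k := k) hzr hzr' hrr' hz4 n
  have hxrz : r + z = x := by rw [hzdef]; abel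
  have hzz : z * z ∈ GS.Rsub := GS.N_mul_N z hzPn z hzPn
  -- the projection of the correction term is a multiple of z*z
  have key : ∃ u ∈ GS.Rsub, GS.projP Pr m = u * (z * z) := by
    refine Submodule.span_induction
      (p := fun m _ => ∃ u ∈ GS.Rsub, GS.projP Pr m = u * (z * z)) (fun w hw => ?_)
      ⟨0, zero_mem _, by rw [map_zero, zero_mul]⟩
      (fun w w' _ _ hw hw' => by
        obtain ⟨u, hu, hu2⟩ := hw
        obtain ⟨u', hu', hu2'⟩ := hw'
        exact ⟨u + u', add_mem hu hu', by rw [map_add, hu2, hu2', add_mul]⟩)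
      (fun c w _ hw => by
        obtain ⟨u, hu, hu2⟩ := hw
        exact ⟨c • u, Submodule.smul_mem _ _ hu, by rw [map_smul, hu2, smul_mul_assoc]⟩) hm
    obtain ⟨a, b, j, habj, hj1, hj3, rfl⟩ := hw
    have hpa : r ^ a ∈ GS.Rsub := GS.Rsub_pow hrR a
    have hpb : (GS.theta r) ^ b ∈ GS.Rsub := GS.Rsub_pow hty b
    interval_cases j
    · -- j = 1
      have hwN : r ^ a * ((GS.theta r) ^ b * z ^ 1) ∈ GS.piece Pn := by
        rw [pow_one]
        exact GS.R_mul_N _ hpa _ (GS.R_mul_N _ hpb _ hzPn)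
      exact ⟨0, zero_mem _, by
        rw [GS.projP_eq_zero_of_piece (P := Pr) hwN pn_not_pr, zero_mul]⟩
    · -- j = 2
      have hzzsq : z ^ 2 = z * z := pow_two z
      have hwR : r ^ a * ((GS.theta r) ^ b * z ^ 2) ∈ GS.Rsub := by
        rw [hzzsq]
        exact GS.R_mul_R _ hpa _ (GS.R_mul_R _ hpb _ hzz)
      refine ⟨r ^ a * (GS.theta r) ^ b, GS.R_mul_R _ hpa _ hpb, ?_⟩
      rw [GS.projP_eq_self_of_piece (P := Pr) hwR, hzzsq, ← mul_assoc]
    · -- j = 3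
      have hz3 : z ^ 3 ∈ GS.piece Pn := by
        have : z ^ 3 = z ^ 2 * z := by rw [← pow_succ]
        rw [this, pow_two]
        exact GS.R_mul_N _ hzz _ hzPn
      have hwN : r ^ a * ((GS.theta r) ^ b * z ^ 3) ∈ GS.piece Pn :=
        GS.R_mul_N _ hpa _ (GS.R_mul_N _ hpb _ hz3)
      exact ⟨0, zero_mem _, by
        rw [GS.projP_eq_zero_of_piece (P := Pr) hwN pn_not_pr, zero_mul]⟩
  obtain ⟨u, hu, hum⟩ := key
  have hπ : GS.projP Pr (x ^ n) = r ^ n + u * (z * z) := by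
    rw [← hxrz, hexp, map_add, hum, GS.projP_eq_self_of_piece (P := Pr) (GS.Rsub_pow hrR n)]
  have hjj : GS.projP Pr (x ^ n) ∈ J := GS.projP_mem_J J hJhom Pr hx
  rw [hπ] at hjj
  set q := u * (z * z) with hq
  have hrn : r ^ n = (r ^ n + q) - q := by abel
  have hqq : q * q = 0 := by
    have hc : (z * z) * u = u * (z * z) := GS.Rsub_comm _ hzz u hu
    have hzzzz : (z * z) * (z * z) = 0 := by
      have h4 : z ^ 4 = (z * z) * (z * z) := by
        rw [show (4 : ℕ) = 2 + 2 from rfl, pow_add, pow_two]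
      rw [← h4]; exact hz4
    rw [hq]
    calc (u * (z * z)) * (u * (z * z)) = u * ((z * z) * (u * (z * z))) :=
        mul_assoc u (z * z) (u * (z * z))
      _ = u * (((z * z) * u) * (z * z)) := by rw [← mul_assoc (z * z) u (z * z)]
      _ = u * ((u * (z * z)) * (z * z)) := by rw [hc]
      _ = u * (u * ((z * z) * (z * z))) := by rw [mul_assoc u (z * z) (z * z)]
      _ = 0 := by rw [hzzzz, mul_zero, mul_zero]
  refine ⟨n * 2, ?_⟩
  rw [pow_mul, pow_two, hrn]
  have hA : (r ^ n + q) * ((r ^ n + q) - q) ∈ J := by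
    rw [mul_sub]
    exact sub_mem (hJideal _ _ hjj).1 (hJideal q _ hjj).2
  have hB : q * ((r ^ n + q) - q) ∈ J := by
    rw [mul_sub]
    refine sub_mem (hJideal _ _ hjj).1 ?_
    rw [hqq]
    exact zero_mem _
  rw [sub_mul]
  exact sub_mem hA hB

/-! ### homogeneity of the radical -/

lemma grading_pow {p : ℤ × ZMod 2} {x : A} (hx : x ∈ GS.grading p) (i : ℕ) :
    x ^ i ∈ GS.grading (i • p) := by
  induction i with
  | zero => rw [pow_zero, zero_smul]; exact GS.one_mem
  | succ i ih =>
    rw [pow_succ, succ_nsmul]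
    exact GS.mul_mem ih hx

lemma grading_mul_below {p : ℤ × ZMod 2} {c : ℤ} {x y : A} (hx : x ∈ GS.grading p)
    (hy : y ∈ GS.piece (fun q => q.1 < c)) :
    x * y ∈ GS.piece (fun q => q.1 < p.1 + c) := by
  have hxp : x ∈ GS.piece (fun q => q = p) := GS.grading_le_piece (P := fun q => q = p) (p := p) rfl hx
  have hkey : ∀ q q' : ℤ × ZMod 2, q = p → q'.1 < c → (q + q').1 < p.1 + c := by
    rintro q q' rfl hq'
    rw [Prod.fst_add]
    omega
  exact GS.piece_mul_piece (P := fun q => q = p) (Q := fun q => q.1 < c)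
    (R' := fun q => q.1 < p.1 + c) hkey x hxp y hy

lemma below_mul_below {a b : ℤ} {x y : A} (hx : x ∈ GS.piece (fun q => q.1 < a))
    (hy : y ∈ GS.piece (fun q => q.1 < b)) :
    x * y ∈ GS.piece (fun q => q.1 < a + b - 1) := by
  refine GS.piece_mul_piece (P := fun q => q.1 < a) (Q := fun q => q.1 < b)
    (R' := fun q => q.1 < a + b - 1) ?_ x hx y hy
  intro p q hp hq
  show (p + q).1 < a + b - 1
  rw [Prod.fst_add]
  omega

lemma pow_below {d : ℤ} {x : A} (hx : x ∈ GS.piece (fun q => q.1 < d)) :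
    ∀ j : ℕ, 1 ≤ j → x ^ j ∈ GS.piece (fun q => q.1 < (j : ℤ) * d - (j : ℤ) + 1) := by
  intro j
  induction j with
  | zero => omega
  | succ j ih =>
    intro _
    rcases Nat.eq_zero_or_pos j with hj | hj
    · subst hj
      have h1 : x ^ (0 + 1) ∈ GS.piece (fun q => q.1 < d) := by rw [pow_one]; exact hx
      refine GS.piece_le (fun q hq => ?_) h1
      show q.1 < ((0 + 1 : ℕ) : ℤ) * d - ((0 + 1 : ℕ) : ℤ) + 1
      push_cast
      linarith
    · have hmem := GS.below_mul_below hx (ih hj)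
      rw [← pow_succ'] at hmem
      refine GS.piece_le (fun q hq => ?_) hmem
      show q.1 < ((j + 1 : ℕ) : ℤ) * d - ((j + 1 : ℕ) : ℤ) + 1
      have hq' : q.1 < d + ((j : ℤ) * d - (j : ℤ) + 1) - 1 := hq
      have hEq : d + ((j : ℤ) * d - (j : ℤ) + 1) - 1 = ((j + 1 : ℕ) : ℤ) * d - ((j + 1 : ℕ) : ℤ) + 1 := by
        push_cast
        ring
      rw [← hEq]
      exact hq'

lemma proj_mem_radR (hJideal : ∀ a : A, ∀ x ∈ J, a * x ∈ J ∧ x * a ∈ J)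
    (hJhom : GS.IsHomogeneous J) :
    ∀ s ∈ GS.radR J hJideal, ∀ p, GS.proj p s ∈ GS.radR J hJideal := by
  suffices H : ∀ N : ℕ, ∀ S : Finset (ℤ × ZMod 2), ∀ s : A, S.card ≤ N →
      (∀ q ∉ S, GS.proj q s = 0) → s = ∑ p ∈ S, GS.proj p s →
      s ∈ GS.radR J hJideal → ∀ p, GS.proj p s ∈ GS.radR J hJideal by
    intro s hs p
    obtain ⟨S, h1, hsum⟩ := GS.exists_finsupport s
    exact H S.card S s le_rfl h1 hsum hs p
  intro N
  induction N with
  | zero =>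
    intro S s hcard hout hsum hs p
    have hS : S = ∅ := Finset.card_eq_zero.1 (Nat.le_zero.1 hcard)
    rw [hS, Finset.sum_empty] at hsum
    rw [hsum, map_zero]
    exact zero_mem _
  | succ N ih =>
    intro S s hcard hout hsum hs p
    rcases S.eq_empty_or_nonempty with hS | hS
    · rw [hS, Finset.sum_empty] at hsum
      rw [hsum, map_zero]
      exact zero_mem _
    obtain ⟨p₀, hp₀S, hmax⟩ := S.exists_max_image Prod.fst hS
    set y := GS.proj p₀ s with hy
    by_cases hy0 : y = 0
    · refine ih (S.erase p₀) s ?_ ?_ ?_ hs p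
      · rw [Finset.card_erase_of_mem hp₀S]; omega
      · intro q hq
        by_cases hqp : q = p₀
        · rw [hqp, ← hy]; exact hy0
        · exact hout q (fun hqS => hq (Finset.mem_erase.2 ⟨hqp, hqS⟩))
      · conv_lhs => rw [hsum]
        rw [← Finset.sum_erase_add S _ hp₀S, ← hy, hy0, add_zero]
    · have hyg : y ∈ GS.grading p₀ := GS.proj_mem p₀ s
      have hsR : s ∈ GS.Rsub := hs.1
      have hPr : Pr p₀ := by
        by_contra hnot
        exact hy0 (GS.proj_eq_zero_of_piece (P := Pr) hsR hnot)
      have hyR : y ∈ GS.Rsub := GS.grading_le_piece hPr hyg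
      set d := p₀.1 with hd
      set s' := s - y with hs'
      have hsum' : s' = ∑ q ∈ S.erase p₀, GS.proj q s := by
        rw [hs']
        conv_lhs => rw [hsum]
        rw [← Finset.sum_erase_add S _ hp₀S, ← hy, add_sub_cancel_right]
      have hs'below : s' ∈ GS.piece (fun q => q.1 < d) := by
        rw [hsum']
        refine Submodule.sum_mem _ (fun q hq => ?_)
        obtain ⟨hqne, hqS⟩ := Finset.mem_erase.1 hq
        rcases lt_or_eq_of_le (hmax q hqS) with hlt | heq
        · exact GS.grading_le_piece hlt (GS.proj_mem q s)
        · have hzero : GS.proj q s = 0 := by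
            by_cases hPrq : Pr q
            · exfalso
              apply hqne
              have h1 := (pr_iff q).1 hPrq
              have h2 := (pr_iff p₀).1 hPr
              have h3 : q.2 = p₀.2 := by rw [← h1, ← h2, heq]
              exact Prod.ext heq h3
            · exact GS.proj_eq_zero_of_piece (P := Pr) hsR hPrq
          rw [hzero]
          exact zero_mem _
      obtain ⟨n, hn⟩ := hs.2
      have hys' : s = y + s' := by rw [hs']; abel
      have hs'R : s' ∈ GS.Rsub := by rw [hs']; exact sub_mem hsR hyR
      have hcomm : Commute y s' := GS.Rsub_comm y hyR s' hs'R
      have hyn : y ^ n ∈ J := by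
        have hrest : s ^ n - y ^ n ∈ GS.piece (fun q => q.1 < (n : ℤ) * d) := by
          rw [hys', hcomm.add_pow, Finset.sum_range_succ]
          simp only [Nat.sub_self, pow_zero, mul_one, Nat.choose_self, Nat.cast_one]
          rw [add_sub_cancel_right]
          refine Submodule.sum_mem _ (fun i hi => ?_)
          rw [Finset.mem_range] at hi
          have hterm : y ^ i * s' ^ (n - i) ∈ GS.piece (fun q => q.1 < (n : ℤ) * d) := by
            have h1 : y ^ i ∈ GS.grading (i • p₀) := GS.grading_pow hyg i
            have h2 : s' ^ (n - i) ∈ GS.piece (fun q =>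
                q.1 < ((n - i : ℕ) : ℤ) * d - ((n - i : ℕ) : ℤ) + 1) :=
              GS.pow_below hs'below (n - i) (by omega)
            have h3 := GS.grading_mul_below h1 h2
            refine GS.piece_le (fun q hq => ?_) h3
            show q.1 < (n : ℤ) * d
            have h4 : (i • p₀).1 = (i : ℤ) * d := by
              show i • p₀.1 = (i : ℤ) * d
              rw [nsmul_eq_mul]
            rw [h4] at hq
            have h5 : (i : ℤ) * d + ((n - i : ℕ) : ℤ) * d = (n : ℤ) * d := by
              rw [← add_mul]
              congr 1
              omega
            have h6 : (1 : ℤ) ≤ ((n - i : ℕ) : ℤ) := by omega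
            linarith
          have hC : y ^ i * s' ^ (n - i) * ((n.choose i : A)) =
              (n.choose i) • (y ^ i * s' ^ (n - i)) := by
            rw [nsmul_eq_mul]
            exact (Nat.cast_commute (n.choose i) _).eq.symm
          rw [hC]
          exact nsmul_mem hterm _
        have hyng : y ^ n ∈ GS.grading (n • p₀) := GS.grading_pow hyg n
        have hsplit : s ^ n = y ^ n + (s ^ n - y ^ n) := by abel
        have hproj : GS.proj (n • p₀) (s ^ n) = y ^ n := by
          rw [hsplit, map_add, GS.proj_of_mem hyng]
          rw [GS.proj_eq_zero_of_piece hrest ?_, add_zero]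
          show ¬ ((n • p₀).1 < (n : ℤ) * d)
          have h4 : (n • p₀).1 = (n : ℤ) * d := by
            show n • p₀.1 = (n : ℤ) * d
            rw [nsmul_eq_mul]
          rw [h4]
          exact lt_irrefl _
        rw [← hproj]
        exact GS.proj_mem_J J hJhom hn _
      have hyrad : y ∈ GS.radR J hJideal := ⟨hyR, n, hyn⟩
      have hs'rad : s' ∈ GS.radR J hJideal := by rw [hs']; exact sub_mem hs hyrad
      have hout' : ∀ q ∉ S.erase p₀, GS.proj q s' = 0 := by
        intro q hq
        rw [hs', map_sub]
        by_cases hqp : q = p₀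
        · rw [hqp, ← hy, GS.proj_of_mem hyg, sub_self]
        · rw [GS.proj_of_mem_ne hyg (fun h => hqp h.symm), sub_zero]
          exact hout q (fun hqS => hq (Finset.mem_erase.2 ⟨hqp, hqS⟩))
      have hsum'' : s' = ∑ q ∈ S.erase p₀, GS.proj q s' := by
        have hcg : ∀ q ∈ S.erase p₀, GS.proj q s = GS.proj q s' := by
          intro q hq
          obtain ⟨hqne, _⟩ := Finset.mem_erase.1 hq
          rw [hs', map_sub, GS.proj_of_mem_ne hyg (fun h => hqne h.symm), sub_zero]
        rw [← Finset.sum_congr rfl hcg]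
        exact hsum'
      have hcard' : (S.erase p₀).card ≤ N := by
        rw [Finset.card_erase_of_mem hp₀S]; omega
      have hs'proj := ih (S.erase p₀) s' hcard' hout' hsum'' hs'rad
      have hfin : GS.proj p s = GS.proj p s' + GS.proj p y := by
        rw [hs', map_sub]; abel
      rw [hfin]
      refine add_mem (hs'proj p) ?_
      by_cases hqp : p = p₀
      · subst hqp
        rw [GS.proj_of_mem hyg]
        exact hyrad
      · rw [GS.proj_of_mem_ne hyg (fun h => hqp h.symm)]
        exact zero_mem _

end WithJ

/-! ### decomposition of an arbitrary element -/

lemma decompose_RN (a : A) :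
    ∃ ra ∈ GS.Rsub, ∃ za ∈ GS.A0odd ⊔ GS.A1ev, a = ra + za := by
  refine ⟨GS.projP Pr a, GS.projP_mem_piece Pr a, GS.projP (fun p => ¬ Pr p) a, ?_, ?_⟩
  · rw [GS.Nsub_eq, ← GS.piece_congr not_pr_iff_pn]
    exact GS.projP_mem_piece _ a
  · exact (GS.projP_add_projP_not Pr a).symm

lemma R_mul_Nsub {x y : A} (hx : x ∈ GS.Rsub) (hy : y ∈ GS.A0odd ⊔ GS.A1ev) :
    x * y ∈ GS.A0odd ⊔ GS.A1ev := by
  rw [GS.Nsub_eq] at hy ⊢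
  exact GS.R_mul_N x hx y hy

lemma Nsub_mul_R {x y : A} (hx : x ∈ GS.A0odd ⊔ GS.A1ev) (hy : y ∈ GS.Rsub) :
    x * y ∈ GS.A0odd ⊔ GS.A1ev := by
  rw [GS.Nsub_eq] at hx ⊢
  exact GS.N_mul_R x hx y hy

lemma Nsub_mul_Nsub {x y : A} (hx : x ∈ GS.A0odd ⊔ GS.A1ev) (hy : y ∈ GS.A0odd ⊔ GS.A1ev) :
    x * y ∈ GS.Rsub := by
  rw [GS.Nsub_eq] at hx hy
  exact GS.N_mul_N x hx y hy

end GradedSuperalgebra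

open GradedSuperalgebra in
theorem statement3' {k A : Type} [Field k] [Ring A] [Algebra k A]
    (h2 : (2 : k) ≠ 0) (GS : GradedSuperalgebra k A)
    (J : Submodule k A)
    (hJideal : ∀ a : A, ∀ x ∈ J, a * x ∈ J ∧ x * a ∈ J)
    (hJhom : GS.IsHomogeneous J) :
    ∃ K : Submodule k A,
      ((K : Set A) = {x : A | ∃ n : ℕ, x ^ n ∈ J}) ∧
      (∀ a : A, ∀ x ∈ K, a * x ∈ K ∧ x * a ∈ K) ∧
      GS.IsHomogeneous K ∧
      ((K : Set A) = {x : A | ∃ y z : A, y ∈ GS.Rsub ∧ (∃ n : ℕ, y ^ n ∈ J) ∧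
        z ∈ GS.A0odd ⊔ GS.A1ev ∧ x = y + z}) ∧
      (∀ a b : A, a * b - b * a ∈ K) ∧
      (∀ x : A, ∀ n : ℕ, x ^ n ∈ K → x ∈ K) := by
  set Nsub := GS.A0odd ⊔ GS.A1ev with hNsub
  set K := GS.radR J hJideal ⊔ Nsub with hK
  have hradK : GS.radR J hJideal ≤ K := le_sup_left
  have hNK : Nsub ≤ K := le_sup_right
  -- basic membership facts
  have hmemN : ∀ z ∈ Nsub, z ∈ K := fun z hz => hNK hz
  have hNN_rad : ∀ z ∈ Nsub, ∀ w ∈ Nsub, z * w ∈ GS.radR J hJideal := by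
    intro z hz w hw
    refine ⟨GS.Nsub_mul_Nsub hz hw, 5, ?_⟩
    rw [nn_pow_five h2 hz hw]
    exact zero_mem _
  -- (1) set equality with the radical
  have hset : (K : Set A) = {x : A | ∃ n : ℕ, x ^ n ∈ J} := by
    ext x
    constructor
    · intro hx
      obtain ⟨y, hy, z, hz, hyz⟩ := Submodule.mem_sup.1 hx
      obtain ⟨hyR, m, hmy⟩ := hy
      exact ⟨2 * m + 2, by rw [← hyz]; exact GS.forward_pow J hJideal h2 hJhom hyR hmy hz⟩
    · rintro ⟨n, hn⟩
      obtain ⟨hr, hz⟩ := GS.reverse_pow J hJideal h2 hJhom hn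
      exact Submodule.mem_sup.2 ⟨GS.projP Pr x, hr, x - GS.projP Pr x, hz, by abel⟩
  refine ⟨K, hset, ?_, ?_, ?_, ?_, ?_⟩
  -- (2) two-sided ideal
  · intro a x hx
    obtain ⟨ra, hra, za, hza, hadec⟩ := GS.decompose_RN a
    obtain ⟨s, hs, z, hz, hszx⟩ := Submodule.mem_sup.1 hx
    obtain ⟨hsR, m, hms⟩ := hs
    have hcomm : Commute ra s := GS.Rsub_comm ra hra s hsR
    have hrs : ra * s ∈ GS.radR J hJideal := by
      refine ⟨GS.R_mul_R _ hra _ hsR, m, ?_⟩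
      rw [hcomm.mul_pow]
      exact (hJideal _ _ hms).1
    have hsr : s * ra ∈ GS.radR J hJideal := by
      refine ⟨GS.R_mul_R _ hsR _ hra, m, ?_⟩
      rw [hcomm.symm.mul_pow]
      exact (hJideal _ _ hms).2
    constructor
    · have : a * x = ra * s + (ra * z + (za * s + za * z)) := by
        rw [hadec, ← hszx]
        rw [add_mul, mul_add, mul_add]
        abel
      rw [this]
      exact add_mem (hradK hrs) (add_mem (hmemN _ (GS.R_mul_Nsub hra hz))
        (add_mem (hmemN _ (GS.Nsub_mul_R hza hsR)) (hradK (hNN_rad _ hza _ hz))))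
    · have : x * a = s * ra + (s * za + (z * ra + z * za)) := by
        rw [hadec, ← hszx]
        rw [add_mul, mul_add, mul_add]
        abel
      rw [this]
      exact add_mem (hradK hsr) (add_mem (hmemN _ (GS.R_mul_Nsub hsR hza))
        (add_mem (hmemN _ (GS.Nsub_mul_R hz hra)) (hradK (hNN_rad _ hz _ hza))))
  -- (3) homogeneity
  · refine le_antisymm ?_ ?_
    · refine sup_le ?_ ?_
      · intro s hs
        obtain ⟨S, hout, hsum⟩ := GS.exists_finsupport s
        rw [hsum]
        refine Submodule.sum_mem _ (fun p hp => ?_)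
        exact Submodule.subset_span
          ⟨hradK (GS.proj_mem_radR J hJideal hJhom s hs p), p, GS.proj_mem p s⟩
      · rw [hNsub, GS.Nsub_eq]
        refine iSup_le (fun pp => ?_)
        intro y hy
        refine Submodule.subset_span ⟨?_, pp, hy⟩
        refine hNK ?_
        rw [hNsub, GS.Nsub_eq]
        exact GS.grading_le_piece pp.2 hy
    · rw [Submodule.span_le]
      exact fun x hx => hx.1
  -- (4) direct sum description
  · ext x
    simp only [SetLike.mem_coe, Set.mem_setOf_eq]
    constructor
    · intro hx
      obtain ⟨y, hy, z, hz, hyz⟩ := Submodule.mem_sup.1 hx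
      exact ⟨y, z, hy.1, hy.2, hz, hyz.symm⟩
    · rintro ⟨y, z, hyR, hypow, hz, rfl⟩
      exact Submodule.mem_sup.2 ⟨y, ⟨hyR, hypow⟩, z, hz, rfl⟩
  -- (5) commutators
  · intro a b
    obtain ⟨r1, hr1, z1, hz1, ha⟩ := GS.decompose_RN a
    obtain ⟨r2, hr2, z2, hz2, hb⟩ := GS.decompose_RN b
    have hz1Pn : z1 ∈ GS.piece Pn := by rw [← GS.Nsub_eq]; exact hz1
    have hz2Pn : z2 ∈ GS.piece Pn := by rw [← GS.Nsub_eq]; exact hz2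
    have hexp : a * b - b * a = (r1 * r2 - r2 * r1) + ((r1 * z2 - z2 * r1) +
        ((z1 * r2 - r2 * z1) + (z1 * z2 - z2 * z1))) := by
      rw [ha, hb]
      rw [add_mul, add_mul, mul_add, mul_add, mul_add, mul_add]
      abel
    rw [hexp]
    refine add_mem ?_ (add_mem ?_ (add_mem ?_ ?_))
    · rw [GS.Rsub_comm r1 hr1 r2 hr2, sub_self]
      exact zero_mem _
    · rw [GS.zswap z2 hz2Pn r1 hr1, ← sub_mul]
      exact hmemN _ (GS.R_mul_Nsub (sub_mem hr1 (GS.theta_mem_Rsub r1 hr1)) hz2)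
    · rw [GS.zswap z1 hz1Pn r2 hr2, ← sub_mul]
      exact hmemN _ (GS.R_mul_Nsub (sub_mem (GS.theta_mem_Rsub r2 hr2) hr2) hz1)
    · exact hradK (sub_mem (hNN_rad _ hz1 _ hz2) (hNN_rad _ hz2 _ hz1))
  -- (6) radical
  · intro x n hx
    have hx' : x ^ n ∈ (K : Set A) := hx
    rw [hset] at hx'
    obtain ⟨m, hm⟩ := hx'
    have : x ∈ ({x : A | ∃ n : ℕ, x ^ n ∈ J} : Set A) := ⟨n * m, by rw [pow_mul]; exact hm⟩
    rw [← hset] at this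
    exact this


/-!
STATEMENT 3. For a homogeneous ideal `J` of `A`, the radical
`√J = { x : xⁿ ∈ J for some n }` is a homogeneous (two-sided) ideal of `A`, it equals
`√(J ∩ R) ⊕ A₀ᵒᵈᵈ ⊕ A₁ᵉᵛ` (where `√(J ∩ R)` is the radical of `J ∩ R` in the
commutative ring `R = A₀ᵉᵛ ⊕ A₁ᵒᵈᵈ`), and `A/√J` is a reduced commutative ring
(expressed by: `√J` is radical and contains all commutators `a*b - b*a`).
-/
theorem statement3 {k A : Type} [Field k] [Ring A] [Algebra k A]
    (h2 : (2 : k) ≠ 0) (GS : GradedSuperalgebra k A)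
    (J : Submodule k A)
    (hJideal : ∀ a : A, ∀ x ∈ J, a * x ∈ J ∧ x * a ∈ J)
    (hJhom : GS.IsHomogeneous J) :
    ∃ K : Submodule k A,
      -- `K` is the radical `√J` of `J`
      ((K : Set A) = {x : A | ∃ n : ℕ, x ^ n ∈ J}) ∧
      -- `√J` is a two-sided ideal of `A`
      (∀ a : A, ∀ x ∈ K, a * x ∈ K ∧ x * a ∈ K) ∧
      -- `√J` is homogeneous
      GS.IsHomogeneous K ∧
      -- `√J = √(J ∩ R) ⊕ A₀ᵒᵈᵈ ⊕ A₁ᵉᵛ`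
      ((K : Set A) = {x : A | ∃ y z : A, y ∈ GS.Rsub ∧ (∃ n : ℕ, y ^ n ∈ J) ∧
        z ∈ GS.A0odd ⊔ GS.A1ev ∧ x = y + z}) ∧
      -- the quotient `A/√J` is commutative ...
      (∀ a b : A, a * b - b * a ∈ K) ∧
      -- ... and reduced
      (∀ x : A, ∀ n : ℕ, x ^ n ∈ K → x ∈ K) := by
  exact statement3' h2 GS J hJideal hJhom
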